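/- Let F be a cdf of the mixture form F(x₁,…,xₙ) = ∫_D (∏ₖ Gₖ(xₖ; y)) g(y) dy, where each Gₖ(·; y) is a cdf with density gₖ(·; y) > 0 and g is a probability density on an interval D ⊂ ℝ. If for every k the ratio gₖ(x; y)/Gₖ(x; y) is monotone in y with the same direction of monotonicity for all k, then for all i ≠ j: F·∂²F/∂xᵢ∂xⱼ − (∂F/∂xᵢ)(∂F/∂xⱼ) ≥ 0, hence F is MTP₂. -/

import Mathlib

open MeasureTheory Filter Asymptotics Topology

lemma prodRatio_le {n : ℕ} (G gdens : Fin n → ℝ → ℝ → ℝ) (t1 t2 : ℝ)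
    (h1 : ∀ k (x : ℝ), HasDerivAt (fun x' => G k x' t1) (gdens k x t1) x)
    (h2 : ∀ k (x : ℝ), HasDerivAt (fun x' => G k x' t2) (gdens k x t2) x)
    (hp1 : ∀ k (x : ℝ), 0 < G k x t1) (hp2 : ∀ k (x : ℝ), 0 < G k x t2)
    (hdir : ∀ k (u : ℝ), gdens k u t1 / G k u t1 ≤ gdens k u t2 / G k u t2)
    (p q : Fin n → ℝ) (hqp : ∀ k, q k ≤ p k) :
    (∏ k, G k (p k) t1 / G k (q k) t1) ≤ ∏ k, G k (p k) t2 / G k (q k) t2 := by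
  apply Finset.prod_le_prod
  · intro k _
    exact div_nonneg (hp1 k _).le (hp1 k _).le
  · intro k _
    have mono : Monotone (fun u => G k u t2 / G k u t1) := by
      apply monotone_of_hasDerivAt_nonneg
        (f' := fun u => (gdens k u t2 * G k u t1 - G k u t2 * gdens k u t1) / (G k u t1) ^ 2)
      · intro u
        exact (h2 k u).div (h1 k u) (hp1 k u).ne'
      · intro u
        apply div_nonneg _ (sq_nonneg _)
        have h := hdir k u
        rw [div_le_div_iff₀ (hp1 k u) (hp2 k u)] at h
        linarith [mul_comm (G k u t2) (gdens k u t1)]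
    have h := mono (hqp k)
    simp only at h
    rw [div_le_div_iff₀ (hp1 k _) (hp1 k _)] at h
    rw [div_le_div_iff₀ (hp1 k _) (hp2 k _)]
    linarith [mul_comm (G k (q k) t2) (G k (p k) t1)]


theorem mtp2_aux_part2 {n : ℕ} (D : Set ℝ) (hD : D.OrdConnected)
    (G gdens : Fin n → ℝ → ℝ → ℝ) (g : ℝ → ℝ)
    (hgnn : ∀ y ∈ D, 0 ≤ g y) (hgint : (∫ y in D, g y) = 1)
    (hGcdf : ∀ k, ∀ y ∈ D, ∀ x : ℝ, HasDerivAt (fun x' => G k x' y) (gdens k x y) x)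
    (hGpos : ∀ k, ∀ y ∈ D, ∀ x : ℝ, 0 < G k x y)
    (hgdenspos : ∀ k, ∀ y ∈ D, ∀ x : ℝ, 0 < gdens k x y)
    (hmono : (∀ k x, MonotoneOn (fun y => gdens k x y / G k x y) D) ∨
             (∀ k x, AntitoneOn (fun y => gdens k x y / G k x y) D))
    (F : (Fin n → ℝ) → ℝ)
    (hF : ∀ x : Fin n → ℝ, F x = ∫ y in D, (∏ k, G k (x k) y) * g y)
    (hFpos : ∀ x, 0 < F x) :
    (∀ x y : Fin n → ℝ, F x * F y ≤ F (x ⊔ y) * F (x ⊓ y)) := by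
  have hDm : MeasurableSet D := hD.measurableSet
  set μ := volume.restrict D with hμ
  have hInt : ∀ z : Fin n → ℝ, Integrable (fun t => (∏ k, G k (z k) t) * g t) μ := by
    intro z
    by_contra h
    have h0 := hFpos z
    rw [hF z, integral_undef h] at h0
    exact lt_irrefl 0 h0
  intro x y
  set m : Fin n → ℝ := x ⊓ y with hmdef
  set M : Fin n → ℝ := x ⊔ y with hMdef
  have hmx : ∀ k, m k ≤ x k := fun k => inf_le_left
  have hmy : ∀ k, m k ≤ y k := fun k => inf_le_right
  set r : ℝ → ℝ := fun t => ∏ k, G k (x k) t / G k (m k) t with hrdef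
  set s : ℝ → ℝ := fun t => ∏ k, G k (y k) t / G k (m k) t with hsdef
  set cg : ℝ → ℝ := fun t => (∏ k, G k (m k) t) * g t with hcgdef
  -- pointwise facts on D
  have hk : ∀ t k, G k (M k) t * G k (m k) t = G k (x k) t * G k (y k) t := by
    intro t k
    rcases le_total (x k) (y k) with h | h
    · rw [show M k = y k from sup_eq_right.2 h, show m k = x k from inf_eq_left.2 h]
      ring
    · rw [show M k = x k from sup_eq_left.2 h, show m k = y k from inf_eq_right.2 h]
  have hae1 : (fun t => (∏ k, G k (x k) t) * g t) =ᵐ[μ] fun t => r t * cg t := by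
    filter_upwards [ae_restrict_mem hDm] with t ht
    have hPm : (0:ℝ) < ∏ k, G k (m k) t := Finset.prod_pos fun k _ => hGpos k t ht _
    simp only [hrdef, hcgdef, Finset.prod_div_distrib]
    field_simp
  have hae2 : (fun t => (∏ k, G k (y k) t) * g t) =ᵐ[μ] fun t => s t * cg t := by
    filter_upwards [ae_restrict_mem hDm] with t ht
    have hPm : (0:ℝ) < ∏ k, G k (m k) t := Finset.prod_pos fun k _ => hGpos k t ht _
    simp only [hsdef, hcgdef, Finset.prod_div_distrib]
    field_simp
  have hae3 : (fun t => (∏ k, G k (M k) t) * g t) =ᵐ[μ] fun t => r t * s t * cg t := by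
    filter_upwards [ae_restrict_mem hDm] with t ht
    have hPm : (0:ℝ) < ∏ k, G k (m k) t := Finset.prod_pos fun k _ => hGpos k t ht _
    have hprod : (∏ k, G k (M k) t) * (∏ k, G k (m k) t)
        = (∏ k, G k (x k) t) * ∏ k, G k (y k) t := by
      rw [← Finset.prod_mul_distrib, ← Finset.prod_mul_distrib]
      exact Finset.prod_congr rfl fun k _ => hk t k
    simp only [hrdef, hsdef, hcgdef, Finset.prod_div_distrib]
    field_simp
    linear_combination g t * hprod
  -- integrability
  have Ic : Integrable cg μ := hInt m
  have Ir : Integrable (fun t => r t * cg t) μ := (hInt x).congr hae1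
  have Is : Integrable (fun t => s t * cg t) μ := (hInt y).congr hae2
  have Irs : Integrable (fun t => r t * s t * cg t) μ := (hInt M).congr hae3
  -- comonotonicity
  have comono : ∀ t ∈ D, ∀ u ∈ D, 0 ≤ (r t - r u) * (s t - s u) := by
    have main : ∀ t ∈ D, ∀ u ∈ D,
        (∀ k (v : ℝ), gdens k v t / G k v t ≤ gdens k v u / G k v u) →
        r t ≤ r u ∧ s t ≤ s u := by
      intro t ht u hu hdir
      constructor
      · exact prodRatio_le G gdens t u (fun k => hGcdf k t ht) (fun k => hGcdf k u hu)
          (fun k => hGpos k t ht) (fun k => hGpos k u hu) hdir x m hmx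
      · exact prodRatio_le G gdens t u (fun k => hGcdf k t ht) (fun k => hGcdf k u hu)
          (fun k => hGpos k t ht) (fun k => hGpos k u hu) hdir y m hmy
    intro t ht u hu
    rcases hmono with hmon | hmon
    · rcases le_total t u with h | h
      · obtain ⟨h1, h2⟩ := main t ht u hu (fun k v => hmon k v ht hu h)
        nlinarith
      · obtain ⟨h1, h2⟩ := main u hu t ht (fun k v => hmon k v hu ht h)
        nlinarith
    · rcases le_total t u with h | h
      · obtain ⟨h1, h2⟩ := main u hu t ht (fun k v => hmon k v ht hu h)
        nlinarith
      · obtain ⟨h1, h2⟩ := main t ht u hu (fun k v => hmon k v hu ht h)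
        nlinarith
  have hcgnn : ∀ t ∈ D, 0 ≤ cg t := by
    intro t ht
    exact mul_nonneg (Finset.prod_nonneg fun k _ => (hGpos k t ht _).le) (hgnn t ht)
  -- double integral nonneg
  have key : 0 ≤ ∫ p : ℝ × ℝ, (r p.1 - r p.2) * (s p.1 - s p.2) * (cg p.1 * cg p.2)
      ∂(μ.prod μ) := by
    apply integral_nonneg_of_ae
    rw [hμ, Measure.prod_restrict]
    filter_upwards [ae_restrict_mem (hDm.prod hDm)] with p hp
    exact mul_nonneg (comono p.1 hp.1 p.2 hp.2)
      (mul_nonneg (hcgnn p.1 hp.1) (hcgnn p.2 hp.2))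
  -- expand
  have expand : (∫ p : ℝ × ℝ, (r p.1 - r p.2) * (s p.1 - s p.2) * (cg p.1 * cg p.2) ∂(μ.prod μ))
      = 2 * ((∫ t, r t * s t * cg t ∂μ) * (∫ t, cg t ∂μ)
          - (∫ t, r t * cg t ∂μ) * (∫ t, s t * cg t ∂μ)) := by
    have I1 : Integrable (fun p : ℝ × ℝ => r p.1 * s p.1 * cg p.1 * cg p.2) (μ.prod μ) :=
      Irs.mul_prod Ic
    have I2 : Integrable (fun p : ℝ × ℝ => r p.1 * cg p.1 * (s p.2 * cg p.2)) (μ.prod μ) :=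
      Ir.mul_prod Is
    have I3 : Integrable (fun p : ℝ × ℝ => s p.1 * cg p.1 * (r p.2 * cg p.2)) (μ.prod μ) :=
      Is.mul_prod Ir
    have I4 : Integrable (fun p : ℝ × ℝ => cg p.1 * (r p.2 * s p.2 * cg p.2)) (μ.prod μ) :=
      Ic.mul_prod Irs
    have I12 : Integrable (fun p : ℝ × ℝ => r p.1 * s p.1 * cg p.1 * cg p.2
        - r p.1 * cg p.1 * (s p.2 * cg p.2)) (μ.prod μ) := I1.sub I2
    have I123 : Integrable (fun p : ℝ × ℝ => r p.1 * s p.1 * cg p.1 * cg p.2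
        - r p.1 * cg p.1 * (s p.2 * cg p.2) - s p.1 * cg p.1 * (r p.2 * cg p.2)) (μ.prod μ) :=
      I12.sub I3
    have heq : (fun p : ℝ × ℝ => (r p.1 - r p.2) * (s p.1 - s p.2) * (cg p.1 * cg p.2))
        = fun p : ℝ × ℝ => r p.1 * s p.1 * cg p.1 * cg p.2 - r p.1 * cg p.1 * (s p.2 * cg p.2)
          - s p.1 * cg p.1 * (r p.2 * cg p.2) + cg p.1 * (r p.2 * s p.2 * cg p.2) := by
      funext p; ring
    have E1 : ∫ p : ℝ × ℝ, r p.1 * s p.1 * cg p.1 * cg p.2 ∂(μ.prod μ)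
        = (∫ t, r t * s t * cg t ∂μ) * ∫ t, cg t ∂μ :=
      integral_prod_mul (fun t => r t * s t * cg t) cg
    have E2 : ∫ p : ℝ × ℝ, r p.1 * cg p.1 * (s p.2 * cg p.2) ∂(μ.prod μ)
        = (∫ t, r t * cg t ∂μ) * ∫ t, s t * cg t ∂μ :=
      integral_prod_mul (fun t => r t * cg t) (fun t => s t * cg t)
    have E3 : ∫ p : ℝ × ℝ, s p.1 * cg p.1 * (r p.2 * cg p.2) ∂(μ.prod μ)
        = (∫ t, s t * cg t ∂μ) * ∫ t, r t * cg t ∂μ :=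
      integral_prod_mul (fun t => s t * cg t) (fun t => r t * cg t)
    have E4 : ∫ p : ℝ × ℝ, cg p.1 * (r p.2 * s p.2 * cg p.2) ∂(μ.prod μ)
        = (∫ t, cg t ∂μ) * ∫ t, r t * s t * cg t ∂μ :=
      integral_prod_mul cg (fun t => r t * s t * cg t)
    rw [heq, integral_add I123 I4, integral_sub I12 I3, integral_sub I1 I2, E1, E2, E3, E4]
    ring
  have hFx : F x = ∫ t, r t * cg t ∂μ := by rw [hF x]; exact integral_congr_ae hae1
  have hFy : F y = ∫ t, s t * cg t ∂μ := by rw [hF y]; exact integral_congr_ae hae2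
  have hFM : F M = ∫ t, r t * s t * cg t ∂μ := by rw [hF M]; exact integral_congr_ae hae3
  have hFm : F m = ∫ t, cg t ∂μ := by rw [hF m]
  rw [hFx, hFy, hFM, hFm]
  linarith [key.trans_eq expand]

theorem mtp2_aux_part1 {n : ℕ} (F : (Fin n → ℝ) → ℝ)
    (hFC2 : ContDiff ℝ 2 F) (hFpos : ∀ x, 0 < F x)
    (part2 : ∀ x y : Fin n → ℝ, F x * F y ≤ F (x ⊔ y) * F (x ⊓ y)) :
    ∀ i j : Fin n, i ≠ j → ∀ x : Fin n → ℝ,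
      0 ≤ F x * fderiv ℝ (fun z => fderiv ℝ F z (Pi.single i 1)) x (Pi.single j 1) -
            fderiv ℝ F x (Pi.single i 1) * fderiv ℝ F x (Pi.single j 1) := by
  intro i j hij x
  have hFd : Differentiable ℝ F := hFC2.differentiable (by norm_num)
  set v : Fin n → ℝ := Pi.single j 1 with hvdef
  set w : Fin n → ℝ := Pi.single i 1 with hwdef
  set F' : (Fin n → ℝ) → (Fin n → ℝ) →L[ℝ] ℝ := fderiv ℝ F with hF'def
  have hF'C1 : ContDiff ℝ 1 F' := hFC2.fderiv_right (by norm_num)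
  set F'' : (Fin n → ℝ) →L[ℝ] (Fin n → ℝ) →L[ℝ] ℝ := fderiv ℝ (fderiv ℝ F) x with hF''def
  have hF''x : HasFDerivAt F' F'' x :=
    ((hF'C1.differentiable (by norm_num)) x).hasFDerivAt
  -- identify the target second derivative
  have A_eq : fderiv ℝ (fun z => fderiv ℝ F z w) x v = F'' v w := by
    have h : HasFDerivAt (fun z => (ContinuousLinearMap.apply ℝ ℝ w) (F' z))
        ((ContinuousLinearMap.apply ℝ ℝ w).comp F'') x :=
      (ContinuousLinearMap.apply ℝ ℝ w).hasFDerivAt.comp x hF''x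
    have h2 : fderiv ℝ (fun z => fderiv ℝ F z w) x
        = (ContinuousLinearMap.apply ℝ ℝ w).comp F'' := h.fderiv
    rw [h2]
    simp [ContinuousLinearMap.comp_apply]
  -- log F and its derivatives
  set φ : (Fin n → ℝ) → ℝ := fun z => Real.log (F z) with hφdef
  set φ' : (Fin n → ℝ) → (Fin n → ℝ) →L[ℝ] ℝ := fun z => (F z)⁻¹ • F' z with hφ'def
  have hφd : ∀ z, HasFDerivAt φ (φ' z) z := fun z => ((hFd z).hasFDerivAt).log (hFpos z).ne'
  set φ'' : (Fin n → ℝ) →L[ℝ] (Fin n → ℝ) →L[ℝ] ℝ :=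
    (F x)⁻¹ • F'' + ((-((F x) ^ 2)⁻¹) • F' x).smulRight (F' x) with hφ''def
  have hφ''x : HasFDerivAt φ' φ'' x := by
    have h1 : HasFDerivAt (fun z => (F z)⁻¹) ((-((F x) ^ 2)⁻¹) • F' x) x :=
      (hasDerivAt_inv (hFpos x).ne').comp_hasFDerivAt x ((hFd x).hasFDerivAt)
    exact h1.smul hF''x
  -- Taylor expansion machinery
  have hconv : Convex ℝ (Set.univ : Set (Fin n → ℝ)) := convex_univ
  have hf : ∀ z ∈ interior (Set.univ : Set (Fin n → ℝ)), HasFDerivAt φ (φ' z) z :=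
    fun z _ => hφd z
  have hx : HasFDerivWithinAt φ' φ'' (interior (Set.univ : Set (Fin n → ℝ))) x :=
    hφ''x.hasFDerivWithinAt
  have T1 := hconv.taylor_approx_two_segment hf (Set.mem_univ x) hx
    (v := v) (w := w) (by simp) (by simp)
  have T0 := hconv.taylor_approx_two_segment hf (Set.mem_univ x) hx
    (v := 0) (w := w) (by simp) (by simp)
  set rect : ℝ → ℝ := fun h => φ (x + h • v + h • w) - φ (x + h • v) - φ (x + h • w) + φ x
    with hrectdef
  have T : (fun h : ℝ => rect h - h ^ 2 • (φ'' v w)) =o[𝓝[>] 0] fun h => h ^ 2 := by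
    have := T1.sub T0
    apply this.congr' _ (Eventually.of_forall fun _ => rfl)
    apply Eventually.of_forall
    intro h
    simp only [hrectdef, smul_zero, add_zero, map_zero, ContinuousLinearMap.zero_apply]
    ring
  have hB : Tendsto (fun h : ℝ => rect h / h ^ 2) (𝓝[>] 0) (𝓝 (φ'' v w)) := by
    have h0 : Tendsto (fun h : ℝ => (rect h - h ^ 2 • (φ'' v w)) / h ^ 2 + φ'' v w)
        (𝓝[>] 0) (𝓝 (0 + φ'' v w)) :=
      (T.tendsto_div_nhds_zero).add tendsto_const_nhds
    rw [zero_add] at h0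
    apply h0.congr'
    filter_upwards [self_mem_nhdsWithin] with h hh
    have h2 : (h : ℝ) ^ 2 ≠ 0 := pow_ne_zero 2 (ne_of_gt hh)
    field_simp
    rw [smul_eq_mul, sub_div, mul_div_cancel_left₀ _ h2]
    ring
  have hrect_nonneg : ∀ h : ℝ, 0 < h → 0 ≤ rect h := by
    intro h hh
    have hsup : (x + h • v) ⊔ (x + h • w) = x + h • v + h • w := by
      funext k
      simp only [Pi.sup_apply, Pi.add_apply, Pi.smul_apply, smul_eq_mul, hvdef, hwdef,
        Pi.single_apply]
      split_ifs with hkj hki hki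
      · exact absurd (hki.symm.trans hkj) hij
      · simp only [mul_one, mul_zero, add_zero]
        exact max_eq_left (by linarith)
      · simp only [mul_one, mul_zero, add_zero, zero_add]
        exact max_eq_right (by linarith)
      · simp only [mul_zero, add_zero]
        exact max_self _
    have hinf : (x + h • v) ⊓ (x + h • w) = x := by
      funext k
      simp only [Pi.inf_apply, Pi.add_apply, Pi.smul_apply, smul_eq_mul, hvdef, hwdef,
        Pi.single_apply]
      split_ifs with hkj hki hki
      · exact absurd (hki.symm.trans hkj) hij
      · simp only [mul_one, mul_zero, add_zero]
        exact min_eq_right (by linarith)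
      · simp only [mul_one, mul_zero, add_zero]
        exact min_eq_left (by linarith)
      · simp only [mul_zero, add_zero]
        exact min_self _
    have hp := part2 (x + h • v) (x + h • w)
    rw [hsup, hinf] at hp
    have hl := Real.log_le_log (mul_pos (hFpos _) (hFpos _)) hp
    rw [Real.log_mul (hFpos _).ne' (hFpos _).ne', Real.log_mul (hFpos _).ne' (hFpos _).ne']
      at hl
    simp only [hrectdef, hφdef]
    linarith
  have hBnn : 0 ≤ φ'' v w := by
    refine ge_of_tendsto hB ?_
    filter_upwards [self_mem_nhdsWithin] with h hh
    exact div_nonneg (hrect_nonneg h hh) (sq_nonneg h)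
  -- unfold φ'' v w
  have hval : φ'' v w = (F x)⁻¹ * (F'' v w) - ((F x) ^ 2)⁻¹ * (F' x v) * (F' x w) := by
    simp only [hφ''def, ContinuousLinearMap.add_apply, ContinuousLinearMap.smul_apply,
      ContinuousLinearMap.smulRight_apply, smul_eq_mul, ContinuousLinearMap.neg_apply]
    ring
  rw [A_eq]
  have hFx := hFpos x
  have key : F x * F'' v w - F' x w * F' x v = (F x) ^ 2 * (φ'' v w) := by
    rw [hval]
    field_simp
  calc (0:ℝ) ≤ (F x) ^ 2 * (φ'' v w) := by positivity
    _ = F x * F'' v w - F' x w * F' x v := key.symm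
    _ = F x * F'' v w - F' x w * F' x v := rfl


/-- A mixture cdf `F(x) = ∫_D ∏ₖ Gₖ(xₖ; y) g(y) dy` is MTP₂ when all the ratios
`gₖ(x;y)/Gₖ(x;y)` are monotone in `y` in the same direction. -/
theorem stmt_3 {n : ℕ} (D : Set ℝ) (hD : D.OrdConnected)
    (G gdens : Fin n → ℝ → ℝ → ℝ) (g : ℝ → ℝ)
    (hgnn : ∀ y ∈ D, 0 ≤ g y) (hgint : (∫ y in D, g y) = 1)
    (hGcdf : ∀ k, ∀ y ∈ D, ∀ x : ℝ, HasDerivAt (fun x' => G k x' y) (gdens k x y) x)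
    (hGpos : ∀ k, ∀ y ∈ D, ∀ x : ℝ, 0 < G k x y)
    (hgdenspos : ∀ k, ∀ y ∈ D, ∀ x : ℝ, 0 < gdens k x y)
    (hmono : (∀ k x, MonotoneOn (fun y => gdens k x y / G k x y) D) ∨
             (∀ k x, AntitoneOn (fun y => gdens k x y / G k x y) D))
    (F : (Fin n → ℝ) → ℝ)
    (hF : ∀ x : Fin n → ℝ, F x = ∫ y in D, (∏ k, G k (x k) y) * g y)
    (hFC2 : ContDiff ℝ 2 F) (hFpos : ∀ x, 0 < F x) :
    (∀ i j : Fin n, i ≠ j → ∀ x : Fin n → ℝ,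
      0 ≤ F x * fderiv ℝ (fun z => fderiv ℝ F z (Pi.single i 1)) x (Pi.single j 1) -
            fderiv ℝ F x (Pi.single i 1) * fderiv ℝ F x (Pi.single j 1)) ∧
    (∀ x y : Fin n → ℝ, F x * F y ≤ F (x ⊔ y) * F (x ⊓ y)) := by
  have p2 := mtp2_aux_part2 D hD G gdens g hgnn hgint hGcdf hGpos hgdenspos hmono F hF hFpos
  exact ⟨mtp2_aux_part1 F hFC2 hFpos p2, p2⟩
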